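/- arXiv:0912.0283 — 4 statements merged into one kernel-verified Lean document; each statement's English description precedes it below -/
import Mathlib

section
/- Let X be a finite topological space and let Good be a collection of locally closed subsets of X such that: (1) for every x ∈ X, the closure of {x} belongs to Good; (2) whenever Y ⊆ Z are locally closed with Z \ Y locally closed, and two of Y, Z, Z \ Y belong to Good, so does the third; (3) Good is closed under finite disjoint unions of relatively open pieces. Then every locally closed subset of X belongs to Good. -/
/-- Let `X` be a finite topological space and `Good` a collection of locally closed
subsets of `X` such that: (1) the closure of every singleton belongs to `Good`;
(2) whenever `Y ⊆ Z` are locally closed with `Z \ Y` locally closed, if two of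
`Y`, `Z`, `Z \ Y` belong to `Good`, so does the third; (3) `Good` is closed under
finite disjoint unions of relatively open pieces.  Then every locally closed subset
of `X` belongs to `Good`. -/
theorem stmt_3 {X : Type*} [TopologicalSpace X] [Finite X] (Good : Set (Set X))
    (hGood : ∀ S ∈ Good, IsLocallyClosed S)
    (h1 : ∀ x : X, closure {x} ∈ Good)
    (h2 : ∀ Y Z : Set X, Y ⊆ Z → IsLocallyClosed Y → IsLocallyClosed Z →
      IsLocallyClosed (Z \ Y) →
      ((Y ∈ Good → Z ∈ Good → Z \ Y ∈ Good) ∧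
       (Y ∈ Good → Z \ Y ∈ Good → Z ∈ Good) ∧
       (Z ∈ Good → Z \ Y ∈ Good → Y ∈ Good)))
    (h3 : ∀ S : Set (Set X), S.Finite → S.Pairwise Disjoint →
      (∀ t ∈ S, t ∈ Good) →
      (∀ t ∈ S, ∃ V : Set X, IsOpen V ∧ t = V ∩ ⋃₀ S) →
      ⋃₀ S ∈ Good) :
    ∀ S : Set X, IsLocallyClosed S → S ∈ Good := by
  have hempty : (∅ : Set X) ∈ Good := by
    have := h3 ∅ Set.finite_empty (by simp) (by simp) (by simp)
    simpa using this
  -- measure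
  set N := Nat.card X + 1 with hN
  have hle : ∀ T : Set X, T.ncard < N := by
    intro T
    have := Set.ncard_le_ncard (Set.subset_univ T) Set.finite_univ
    have h2 : (Set.univ : Set X).ncard = Nat.card X := Set.ncard_univ X
    omega
  have main : ∀ n : ℕ, ∀ S : Set X, IsLocallyClosed S →
      N * (closure S).ncard + (closure S \ S).ncard = n → S ∈ Good := by
    intro n
    induction n using Nat.strong_induction_on with
    | _ n ih =>
      intro S hS hm
      rcases S.eq_empty_or_nonempty with rfl | hne
      · exact hempty
      by_cases hcl : IsClosed S
      · -- S is closed and nonempty: remove the closure of a maximal point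
        obtain ⟨x, hxS, hxmax⟩ := Set.Finite.exists_maximalFor
          (fun y : X => closure {y}) S S.toFinite hne
        have hclS : closure S = S := hcl.closure_eq
        have hxcl : closure {x} ⊆ S := closure_minimal (by simpa using hxS) hcl
        set T := S \ closure {x} with hT
        have hTlc : IsLocallyClosed T := by
          rw [hT, Set.diff_eq]
          exact hS.inter isClosed_closure.isOpen_compl.isLocallyClosed
        -- x ∉ closure T
        have hxT : x ∉ closure T := by
          intro hx
          have hK : closure T = ⋃ y ∈ T, closure {y} := by
            apply subset_antisymm
            · apply closure_minimal
              · intro y hy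
                exact Set.mem_biUnion hy (subset_closure rfl)
              · exact Set.Finite.isClosed_biUnion T.toFinite
                  (fun _ _ => isClosed_closure)
            · exact Set.iUnion₂_subset fun y hy =>
                closure_mono (Set.singleton_subset_iff.2 hy)
          rw [hK] at hx
          obtain ⟨y, hyT, hxy⟩ := Set.mem_iUnion₂.1 hx
          have hsub : closure {x} ⊆ closure {y} :=
            closure_minimal (Set.singleton_subset_iff.2 hxy) isClosed_closure
          have := hxmax hyT.1 hsub
          exact hyT.2 (this (subset_closure rfl))
        have hTsub : closure T ⊆ S := closure_minimal Set.diff_subset hcl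
        have hTslt : (closure T).ncard < S.ncard :=
          Set.ncard_lt_ncard ⟨hTsub, fun h => hxT (h hxS)⟩ S.toFinite
        have hmT : N * (closure T).ncard + (closure T \ T).ncard < n := by
          have h1 := hle (closure T \ T)
          have : N * (closure T).ncard + N ≤ N * S.ncard := by
            have : (closure T).ncard + 1 ≤ S.ncard := hTslt
            calc N * (closure T).ncard + N = N * ((closure T).ncard + 1) := by ring
              _ ≤ N * S.ncard := Nat.mul_le_mul_left N this
          rw [← hm, hclS]
          omega
        have hTGood : T ∈ Good := ih _ hmT T hTlc rfl
        have hdiff : IsLocallyClosed (S \ closure {x}) := hTlc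
        exact (h2 (closure {x}) S hxcl isClosed_closure.isLocallyClosed hS hdiff).2.1
          (h1 x) hTGood
      · -- S not closed: S = closure S \ (closure S \ S)
        set C := closure S with hC
        set D := C \ S with hD
        have hDclosed : IsClosed D := by
          have := hS.isOpen_coborder
          have hc : D = (coborder S)ᶜ := by rw [coborder]; simp [hD, hC]
          rw [hc]
          exact isClosed_compl_iff.mpr this
        have hSC : S ⊆ C := subset_closure
        have hDlt : D.ncard < C.ncard := by
          obtain ⟨x, hx⟩ := hne
          exact Set.ncard_lt_ncard ⟨Set.diff_subset, fun h =>
            (h (hSC hx)).2 hx⟩ C.toFinite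
        have hDne : (C \ S).Nonempty := by
          rw [Set.nonempty_iff_ne_empty]
          intro h
          apply hcl
          have hsub : C ⊆ S := Set.diff_eq_empty.1 h
          have hSeq : S = C := subset_antisymm hSC hsub
          rw [hSeq]; exact isClosed_closure
        have hmC : N * (closure C).ncard + (closure C \ C).ncard < n := by
          rw [isClosed_closure.closure_eq]
          simp only [hC, Set.diff_self, Set.ncard_empty, add_zero]
          have hm' : N * (closure S).ncard + D.ncard = n := hm
          have hpos : 0 < D.ncard := (Set.ncard_pos D.toFinite).2 hDne
          omega
        have hmD : N * (closure D).ncard + (closure D \ D).ncard < n := by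
          rw [hDclosed.closure_eq]
          simp only [Set.diff_self, Set.ncard_empty, add_zero]
          have hm' : N * (closure S).ncard + D.ncard = n := hm
          have hDlt' : D.ncard < (closure S).ncard := hDlt
          have h1 : N * (D.ncard + 1) ≤ N * (closure S).ncard :=
            Nat.mul_le_mul_left N hDlt'
          have : N * D.ncard + N ≤ N * (closure S).ncard := by
            calc N * D.ncard + N = N * (D.ncard + 1) := by ring
              _ ≤ N * (closure S).ncard := h1
          omega
        have hCGood : C ∈ Good := ih _ hmC C isClosed_closure.isLocallyClosed rfl
        have hDGood : D ∈ Good := ih _ hmD D hDclosed.isLocallyClosed rfl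
        have hCD : C \ D = S := by
          rw [hD, Set.diff_diff_right, Set.diff_self, Set.empty_union,
            Set.inter_eq_right.2 hSC]
        have := (h2 D C Set.diff_subset hDclosed.isLocallyClosed
          isClosed_closure.isLocallyClosed (hCD ▸ hS)).1 hDGood hCGood
        rwa [hCD] at this
  intro S hS
  exact main _ S hS rfl
end

section
/- Let π: B → C be a surjective *-homomorphism of C*-algebras with kernel I, and let π̃: C_b(T,B) → C_b(T,C) be the induced map. Then the preimage π̃^{-1}(C_0(T,C)) equals C_b(T,I) + C_0(T,B). -/
open Filter NNReal

open Unitization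

section Aux

variable {A : Type*} [NonUnitalNormedRing A] [StarRing A] [CStarRing A]
    [NormedSpace ℂ A] [CompleteSpace A] [IsScalarTower ℂ A A] [SMulCommClass ℂ A A]

private lemma aux_spectralRadius {x : A} (hx : star x = x) :
    spectralRadius ℂ (x : Unitization ℂ A) = ‖x‖₊ := by
  let sqe : ℕ → A := fun n => Nat.rec x (fun _ p => p * p) n
  have hsqe_succ : ∀ n, sqe (n + 1) = sqe n * sqe n := fun n => rfl
  have h1 : ∀ n, star (sqe n) = sqe n := by
    intro n; induction n with
    | zero => exact hx
    | succ k ih => rw [hsqe_succ, star_mul, ih]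
  have h2 : ∀ n, (x : Unitization ℂ A) ^ (2 ^ n) = (Unitization.inr (sqe n) : Unitization ℂ A) := by
    intro n; induction n with
    | zero => simp [sqe]
    | succ k ih =>
      rw [pow_succ, pow_mul, ih, hsqe_succ, Unitization.inr_mul, sq]
  have h3 : ∀ n, ‖sqe n‖₊ = ‖x‖₊ ^ (2 ^ n) := by
    intro n; induction n with
    | zero => simp [sqe]
    | succ k ih =>
      rw [hsqe_succ]
      calc ‖sqe k * sqe k‖₊ = ‖star (sqe k) * sqe k‖₊ := by rw [h1]
        _ = ‖sqe k‖₊ * ‖sqe k‖₊ := CStarRing.nnnorm_star_mul_self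
        _ = ‖x‖₊ ^ (2 ^ (k + 1)) := by rw [ih, pow_succ, pow_mul]; ring
  have hconst : Tendsto (fun _ : ℕ => (‖x‖₊ : ENNReal)) atTop (nhds (‖x‖₊ : ENNReal)) :=
    tendsto_const_nhds
  refine tendsto_nhds_unique ?_ hconst
  convert (spectrum.pow_nnnorm_pow_one_div_tendsto_nhds_spectralRadius
    (x : Unitization ℂ A)).comp (tendsto_pow_atTop_atTop_of_one_lt (one_lt_two)) using 1
  funext n
  rw [Function.comp_apply, h2 n, Unitization.nnnorm_inr, h3 n, ENNReal.coe_pow,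
    ← ENNReal.rpow_natCast, ← ENNReal.rpow_mul]
  simp

variable {B : Type*} [NonUnitalNormedRing B] [StarRing B] [CStarRing B]
    [NormedSpace ℂ B] [CompleteSpace B] [IsScalarTower ℂ B B] [SMulCommClass ℂ B B]

private lemma aux_norm_le (π : A →⋆ₙₐ[ℂ] B) (a : A) : ‖π a‖ ≤ ‖a‖ := by
  let πₐ : Unitization ℂ A →ₐ[ℂ] Unitization ℂ B :=
    Unitization.lift ((Unitization.inrNonUnitalAlgHom ℂ B).comp π.toNonUnitalAlgHom)
  have hπₐ : ∀ y : A, πₐ (y : Unitization ℂ A) = ((π y : B) : Unitization ℂ B) := by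
    intro y; simp [πₐ]
  have key : ∀ y : A, star y = y → ‖π y‖₊ ≤ ‖y‖₊ := by
    intro y hy
    have hsub := AlgHom.spectrum_apply_subset πₐ (y : Unitization ℂ A)
    have hsp : spectralRadius ℂ ((π y : B) : Unitization ℂ B)
        ≤ spectralRadius ℂ (y : Unitization ℂ A) := by
      rw [← hπₐ y]
      exact iSup_le_iSup_of_subset hsub
    rw [aux_spectralRadius (by rw [← map_star, hy]), aux_spectralRadius hy] at hsp
    exact_mod_cast hsp
  have h2 : ‖π a‖ ^ 2 ≤ ‖a‖ ^ 2 := by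
    calc ‖π a‖ ^ 2 = ‖star (π a) * π a‖ := by rw [CStarRing.norm_star_mul_self, sq]
      _ = ‖π (star a * a)‖ := by rw [← map_star, ← map_mul]
      _ ≤ ‖star a * a‖ := by exact_mod_cast key _ (by simp [star_mul])
      _ ≤ ‖star a‖ * ‖a‖ := norm_mul_le _ _
      _ = ‖a‖ ^ 2 := by rw [norm_star, sq]
  nlinarith [norm_nonneg (π a), norm_nonneg a]

private lemma aux_convbound (θ : ℝ) (v w : B) (c : ℝ) (h0 : 0 ≤ θ) (h1 : θ ≤ 1)
    (hv : ‖v‖ ≤ c) (hw : ‖w‖ ≤ c) : ‖(1 - θ) • v + θ • w‖ ≤ c := by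
  calc ‖(1 - θ) • v + θ • w‖ ≤ ‖(1 - θ) • v‖ + ‖θ • w‖ := norm_add_le _ _
    _ = (1 - θ) * ‖v‖ + θ * ‖w‖ := by
        rw [norm_smul, norm_smul, Real.norm_of_nonneg (by linarith), Real.norm_of_nonneg h0]
    _ ≤ (1 - θ) * c + θ * c := by nlinarith [norm_nonneg v, norm_nonneg w]
    _ = c := by ring

end Aux

/-- Let `π : B → C` be a surjective `*`-homomorphism of C*-algebras with kernel `I`,
and let `π̃ : C_b(T,B) → C_b(T,C)` be the induced (pointwise) map, `T = [0,∞)`.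
Then `π̃⁻¹(C_0(T,C)) = C_b(T,I) + C_0(T,B)`:  a bounded continuous function `f`
satisfies `π ∘ f → 0` at infinity if and only if `f = g + h` with `g` bounded
continuous with values in `I = ker π` and `h` vanishing at infinity. -/
theorem stmt_9 {B : Type*} [NonUnitalNormedRing B] [StarRing B] [CStarRing B]
    [NormedSpace ℂ B] [CompleteSpace B] [IsScalarTower ℂ B B] [SMulCommClass ℂ B B]
    {C : Type*} [NonUnitalNormedRing C] [StarRing C] [CStarRing C]
    [NormedSpace ℂ C] [CompleteSpace C] [IsScalarTower ℂ C C] [SMulCommClass ℂ C C]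
    (π : B →⋆ₙₐ[ℂ] C) (hsurj : Function.Surjective π)
    (f : BoundedContinuousFunction ℝ≥0 B) :
    Tendsto (fun t => π (f t)) atTop (nhds 0) ↔
      ∃ g h : BoundedContinuousFunction ℝ≥0 B,
        (∀ t, π (g t) = 0) ∧ Tendsto (⇑h) atTop (nhds 0) ∧ f = g + h := by
  have hπ : ∀ b : B, ‖π b‖ ≤ ‖b‖ := aux_norm_le π
  have hπs : ∀ (r : ℝ) (v : B), π (r • v) = r • π v := fun r v => by
    rw [← Complex.coe_smul, map_smul, Complex.coe_smul]
  constructor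
  · intro hf
    -- continuous linear map and controlled section
    let πₗ : B →ₗ[ℂ] C := { toFun := π, map_add' := map_add π, map_smul' := map_smul π }
    let πL : B →L[ℂ] C := πₗ.mkContinuous 1 (fun b => by rw [one_mul]; exact hπ b)
    have hπL : ∀ b, πL b = π b := fun b => rfl
    obtain ⟨K, hK0, hKs⟩ := πL.exists_preimage_norm_le (by
      intro c; obtain ⟨b, hb⟩ := hsurj c; exact ⟨b, by rw [hπL, hb]⟩)
    have hsec : ∀ b : B, ∃ b' : B, π b' = π b ∧ ‖b'‖ ≤ K * ‖π b‖ := fun b => by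
      obtain ⟨x, hx1, hx2⟩ := hKs (π b); exact ⟨x, by rw [← hπL, hx1], hx2⟩
    choose s hs1 hs2 using hsec
    -- u tends to zero
    have hu : Tendsto (fun t => ‖π (f t)‖) atTop (nhds 0) :=
      tendsto_zero_iff_norm_tendsto_zero.mp hf
    -- moduli of uniform continuity on compact pieces
    have hmod : ∀ m : ℕ, ∃ δ : ℝ, 0 < δ ∧ ∀ x ∈ Set.Icc (0:ℝ≥0) ((m:ℝ≥0)+2),
        ∀ y ∈ Set.Icc (0:ℝ≥0) ((m:ℝ≥0)+2),
        dist x y ≤ δ → dist (f x) (f y) ≤ ((m:ℝ)+1)⁻¹ := by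
      intro m
      have hc : IsCompact (Set.Icc (0:ℝ≥0) ((m:ℝ≥0)+2)) := isCompact_Icc
      have huc := hc.uniformContinuousOn_of_continuous (f.continuous.continuousOn)
      obtain ⟨δ, hδ, H⟩ := Metric.uniformContinuousOn_iff_le.mp huc ((m:ℝ)+1)⁻¹ (by positivity)
      exact ⟨δ, hδ, H⟩
    choose δ hδpos hδ using hmod
    set step : ℕ → ℝ≥0 := fun m => min (δ m).toNNReal 1 with hstep_def
    have hstep_pos : ∀ m, 0 < step m := fun m =>
      lt_min (Real.toNNReal_pos.mpr (hδpos m)) one_pos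
    have hstep_le1 : ∀ m, step m ≤ 1 := fun m => min_le_right _ _
    have hstep_leδ : ∀ m, (step m : ℝ) ≤ δ m := by
      intro m
      have h1 : step m ≤ (δ m).toNNReal := min_le_left _ _
      calc (step m : ℝ) ≤ ((δ m).toNNReal : ℝ) := by exact_mod_cast h1
        _ = δ m := Real.coe_toNNReal _ (hδpos m).le
    -- the grid
    set t : ℕ → ℝ≥0 := fun n => Nat.rec 0 (fun _ p => p + step ⌊p⌋₊) n with ht_def
    have ht0 : t 0 = 0 := rfl
    have htsucc : ∀ n, t (n+1) = t n + step ⌊t n⌋₊ := fun n => rfl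
    have hmono : StrictMono t := strictMono_nat_of_lt_succ fun n => by
      rw [htsucc]; exact lt_add_of_pos_right _ (hstep_pos _)
    have hunbdd : ∀ M : ℕ, ∃ n, (M : ℝ≥0) ≤ t n := by
      intro M
      by_contra hcon
      push_neg at hcon
      have hfl : ∀ n, ⌊t n⌋₊ < M := fun n => (Nat.floor_lt zero_le).mpr (by
        exact_mod_cast hcon n)
      have hM : 0 < M := Nat.pos_of_ne_zero (by
        rintro rfl
        have := hcon 0
        rw [ht0] at this
        simp at this)
      have hne : (Finset.range M).Nonempty := ⟨0, Finset.mem_range.mpr hM⟩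
      set c : ℝ≥0 := (Finset.range M).inf' hne step with hc_def
      have hc_pos : 0 < c := by
        rw [hc_def, Finset.lt_inf'_iff]; exact fun m _ => hstep_pos m
      have hc_le : ∀ n, c ≤ step ⌊t n⌋₊ := fun n =>
        Finset.inf'_le _ (Finset.mem_range.mpr (hfl n))
      have hlow : ∀ n : ℕ, (n : ℝ≥0) * c ≤ t n := by
        intro n; induction n with
        | zero => simp [ht0]
        | succ k ih =>
          rw [htsucc]
          push_cast
          calc ((k:ℝ≥0)+1)*c = (k:ℝ≥0)*c + c := by ring
            _ ≤ t k + step ⌊t k⌋₊ := add_le_add ih (hc_le k)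
      obtain ⟨n, hn⟩ := exists_nat_gt ((M : ℝ≥0) / c)
      have hlt : (M : ℝ≥0) < (n:ℝ≥0) * c := by
        rw [← div_lt_iff₀ hc_pos]
        exact hn
      exact absurd ((hlt.trans_le (hlow n)).trans (hcon n)) (lt_irrefl _)
    have htop : Tendsto t atTop atTop :=
      tendsto_atTop_atTop_of_monotone hmono.monotone (fun b => by
        obtain ⟨n, hn⟩ := hunbdd ⌈b⌉₊
        exact ⟨n, le_trans (Nat.le_ceil b) hn⟩)
    have hex : ∀ x : ℝ≥0, ∃ n, x < t (n+1) := by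
      intro x
      obtain ⟨n, hn⟩ := hunbdd (⌊x⌋₊ + 1)
      refine ⟨n, lt_of_lt_of_le ?_ (hn.trans (hmono.monotone (Nat.le_succ n)))⟩
      exact_mod_cast Nat.lt_floor_add_one x
    set idx : ℝ≥0 → ℕ := fun x => Nat.find (hex x) with hidx_def
    have hidx_lt : ∀ x, x < t (idx x + 1) := fun x => Nat.find_spec (hex x)
    have hidx_min : ∀ x k, x < t (k+1) → idx x ≤ k := fun x k hk => Nat.find_min' (hex x) hk
    have hidx_le : ∀ x, t (idx x) ≤ x := by
      intro x
      rcases Nat.eq_zero_or_pos (idx x) with h | h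
      · rw [h, ht0]; exact zero_le
      · by_contra hcon
        push_neg at hcon
        have h2 : x < t ((idx x - 1) + 1) := by
          rw [Nat.sub_add_cancel h]; exact hcon
        have := hidx_min x _ h2
        omega
    have hidx_eq : ∀ x n, t n ≤ x → x < t (n+1) → idx x = n := by
      intro x n h1 h2
      have hle : idx x ≤ n := hidx_min x n h2
      have hgt : n < idx x + 1 := hmono.lt_iff_lt.mp (lt_of_le_of_lt h1 (hidx_lt x))
      omega
    -- kernel approximants
    set gs : ℕ → B := fun m => f (t m) - s (f (t m)) with hgs_def
    have hgs_ker : ∀ m, π (gs m) = 0 := fun m => by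
      rw [hgs_def]
      simp only [map_sub, hs1, sub_self]
    have hgs_close : ∀ m, ‖f (t m) - gs m‖ ≤ K * ‖π (f (t m))‖ := fun m => by
      rw [hgs_def]
      simpa [sub_sub_cancel] using hs2 (f (t m))
    have hgs_bdd : ∀ m, ‖gs m‖ ≤ (1 + K) * ‖f‖ := by
      intro m
      have h1 : ‖s (f (t m))‖ ≤ K * ‖π (f (t m))‖ := hs2 _
      have h2 : ‖π (f (t m))‖ ≤ ‖f (t m)‖ := hπ _
      have h3 : ‖f (t m)‖ ≤ ‖f‖ := f.norm_coe_le_norm _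
      have h4 : ‖gs m‖ ≤ ‖f (t m)‖ + ‖s (f (t m))‖ := norm_sub_le _ _
      nlinarith [norm_nonneg (π (f (t m)))]
    -- affine pieces
    set Af : ℕ → ℝ≥0 → B := fun n x =>
      gs n + (((x:ℝ) - (t n : ℝ)) / ((t (n+1) : ℝ) - (t n : ℝ))) • (gs (n+1) - gs n)
      with hAf_def
    have hAf_cont : ∀ n, Continuous (Af n) := by
      intro n
      apply Continuous.add continuous_const
      exact ((NNReal.continuous_coe.sub continuous_const).div_const _).smul continuous_const
    have hden_pos : ∀ n : ℕ, (0:ℝ) < (t (n+1) : ℝ) - (t n : ℝ) := fun n => by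
      rw [sub_pos]; exact_mod_cast hmono (Nat.lt_succ_self n)
    set G : ℝ≥0 → B := fun x => Af (idx x) x with hG_def
    have hagree : ∀ n, ∀ x ∈ Set.Icc (t n) (t (n+1)), G x = Af n x := by
      intro n x hx
      rcases lt_or_eq_of_le hx.2 with h | h
      · rw [hG_def]; simp only []; rw [hidx_eq x n hx.1 h]
      · have hidx' : idx x = n + 1 := by
          refine hidx_eq x (n+1) h.ge ?_
          rw [h]; exact hmono (Nat.lt_succ_self (n+1))
        rw [hG_def]; simp only []; rw [hidx', hAf_def]
        simp only []
        rw [h]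
        rw [sub_self, zero_div, zero_smul, add_zero,
          div_self (ne_of_gt (hden_pos n)), one_smul]
        abel
    have hGcont : Continuous G := by
      rw [continuous_iff_continuousAt]
      intro x₀
      rcases lt_or_eq_of_le (hidx_le x₀) with hlt | heq
      · have hmem : x₀ ∈ Set.Ioo (t (idx x₀)) (t (idx x₀ + 1)) := ⟨hlt, hidx_lt x₀⟩
        refine ContinuousAt.congr (hAf_cont (idx x₀)).continuousAt ?_
        exact Filter.eventuallyEq_of_mem (isOpen_Ioo.mem_nhds hmem)
          (fun y hy => (hagree (idx x₀) y ⟨hy.1.le, hy.2.le⟩).symm)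
      · rcases Nat.eq_zero_or_pos (idx x₀) with h0 | hpos
        · -- x₀ = t 0 = 0
          have hx0 : x₀ ∈ Set.Iio (t 1) := by
            rw [Set.mem_Iio, ← heq, h0]
            exact hmono Nat.zero_lt_one
          refine ContinuousAt.congr (hAf_cont 0).continuousAt ?_
          refine Filter.eventuallyEq_of_mem (isOpen_Iio.mem_nhds hx0) (fun y hy => ?_)
          exact (hagree 0 y ⟨by rw [ht0]; exact zero_le, le_of_lt hy⟩).symm
        · obtain ⟨m, hm⟩ := Nat.exists_eq_succ_of_ne_zero hpos.ne'
          have hx₀ : x₀ = t (m+1) := by rw [← heq, hm]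
          have hmem1 : x₀ ∈ Set.Icc (t m) (t (m+1)) := by
            rw [hx₀]; exact ⟨(hmono (Nat.lt_succ_self m)).le, le_rfl⟩
          have hmem2 : x₀ ∈ Set.Icc (t (m+1)) (t (m+2)) := by
            rw [hx₀]; exact ⟨le_rfl, (hmono (Nat.lt_succ_self (m+1))).le⟩
          have h1 : ContinuousWithinAt G (Set.Icc (t m) (t (m+1))) x₀ :=
            ((hAf_cont m).continuousAt.continuousWithinAt).congr
              (fun y hy => hagree m y hy) (hagree m x₀ hmem1)
          have h2 : ContinuousWithinAt G (Set.Icc (t (m+1)) (t (m+2))) x₀ :=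
            ((hAf_cont (m+1)).continuousAt.continuousWithinAt).congr
              (fun y hy => hagree (m+1) y hy) (hagree (m+1) x₀ hmem2)
          have hun := h1.union h2
          rw [Set.Icc_union_Icc_eq_Icc (hmono.monotone (Nat.le_succ m))
            (hmono.monotone (Nat.le_succ (m+1)))] at hun
          refine hun.continuousAt (Icc_mem_nhds ?_ ?_)
          · rw [hx₀]; exact hmono (Nat.lt_succ_self m)
          · rw [hx₀]; exact hmono (Nat.lt_succ_self (m+1))
    -- oscillation bounds
    have hosc : ∀ n, ∀ x ∈ Set.Icc (t n) (t (n+1)),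
        ‖f x - f (t n)‖ ≤ ((⌊t n⌋₊:ℝ)+1)⁻¹ ∧ ‖f x - f (t (n+1))‖ ≤ ((⌊t n⌋₊:ℝ)+1)⁻¹ := by
      intro n x hx
      have h1 : t n < (⌊t n⌋₊:ℝ≥0) + 1 := Nat.lt_floor_add_one (t n)
      have ht1 : t (n+1) ≤ t n + 1 := by
        rw [htsucc]; exact add_le_add_right (hstep_le1 _) _
      have hball : ∀ y : ℝ≥0, y ≤ t (n+1) → y ∈ Set.Icc (0:ℝ≥0) ((⌊t n⌋₊:ℝ≥0)+2) := by
        intro y hy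
        refine ⟨zero_le, ?_⟩
        calc y ≤ t (n+1) := hy
          _ ≤ t n + 1 := ht1
          _ ≤ ((⌊t n⌋₊:ℝ≥0) + 1) + 1 := add_le_add_left h1.le _
          _ = (⌊t n⌋₊:ℝ≥0) + 2 := by ring
      have hxm := hball x hx.2
      have htnm := hball (t n) (hmono (Nat.lt_succ_self n)).le
      have htn1m := hball (t (n+1)) le_rfl
      have hxle : (x:ℝ) ≤ (t n : ℝ) + (step ⌊t n⌋₊ : ℝ) := by
        have := hx.2
        rw [htsucc] at this
        exact_mod_cast this
      have htnx : (t n : ℝ) ≤ (x:ℝ) := by exact_mod_cast hx.1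
      have hd1 : dist x (t n) ≤ δ ⌊t n⌋₊ := by
        rw [NNReal.dist_eq, abs_of_nonneg (by linarith)]
        have := hstep_leδ ⌊t n⌋₊
        linarith
      have hd2 : dist x (t (n+1)) ≤ δ ⌊t n⌋₊ := by
        have h2 : (x:ℝ) ≤ (t (n+1):ℝ) := by exact_mod_cast hx.2
        have heq2 : (t (n+1) : ℝ) = (t n : ℝ) + (step ⌊t n⌋₊ : ℝ) := by
          rw [htsucc]; push_cast; ring
        have h3 := hstep_leδ ⌊t n⌋₊
        rw [NNReal.dist_eq, abs_of_nonpos (by linarith)]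
        linarith
      constructor
      · rw [← dist_eq_norm]
        exact hδ ⌊t n⌋₊ x hxm (t n) htnm hd1
      · rw [← dist_eq_norm]
        exact hδ ⌊t n⌋₊ x hxm (t (n+1)) htn1m hd2
    -- the quantitative estimate
    have hest : ∀ x, ‖f x - G x‖ ≤ ((⌊t (idx x)⌋₊:ℝ)+1)⁻¹
        + K * ‖π (f (t (idx x)))‖ + K * ‖π (f (t (idx x + 1)))‖ := by
      intro x
      have hKu1 : 0 ≤ K * ‖π (f (t (idx x)))‖ :=
        mul_nonneg hK0.le (norm_nonneg _)
      have hKu2 : 0 ≤ K * ‖π (f (t (idx x + 1)))‖ :=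
        mul_nonneg hK0.le (norm_nonneg _)
      set n := idx x with hn
      set θ : ℝ := ((x:ℝ) - (t n:ℝ))/((t (n+1):ℝ) - (t n:ℝ)) with hθ
      have hθ0 : 0 ≤ θ := div_nonneg (by
        have : (t n:ℝ) ≤ (x:ℝ) := by exact_mod_cast hidx_le x
        linarith) (hden_pos n).le
      have hθ1 : θ ≤ 1 := by
        rw [hθ, div_le_one (hden_pos n)]
        have : (x:ℝ) ≤ (t (n+1):ℝ) := by exact_mod_cast (hidx_lt x).le
        linarith
      have hGx : G x = (1-θ)•(gs n) + θ•(gs (n+1)) := by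
        rw [hG_def]; simp only []
        rw [← hn, hAf_def]; simp only []
        rw [← hθ]
        module
      have hsplit : f x - G x = (1-θ)•(f x - gs n) + θ•(f x - gs (n+1)) := by
        rw [hGx]; module
      rw [hsplit]
      have hoscx := hosc n x ⟨hidx_le x, (hidx_lt x).le⟩
      have e1 : ‖f x - gs n‖ ≤ ((⌊t n⌋₊:ℝ)+1)⁻¹ + K * ‖π (f (t n))‖ := by
        calc ‖f x - gs n‖ ≤ ‖f x - f (t n)‖ + ‖f (t n) - gs n‖ := by
              simpa [dist_eq_norm] using dist_triangle (f x) (f (t n)) (gs n)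
          _ ≤ ((⌊t n⌋₊:ℝ)+1)⁻¹ + K * ‖π (f (t n))‖ := add_le_add hoscx.1 (hgs_close n)
      have e2 : ‖f x - gs (n+1)‖ ≤ ((⌊t n⌋₊:ℝ)+1)⁻¹ + K * ‖π (f (t (n+1)))‖ := by
        calc ‖f x - gs (n+1)‖ ≤ ‖f x - f (t (n+1))‖ + ‖f (t (n+1)) - gs (n+1)‖ := by
              simpa [dist_eq_norm] using dist_triangle (f x) (f (t (n+1))) (gs (n+1))
          _ ≤ ((⌊t n⌋₊:ℝ)+1)⁻¹ + K * ‖π (f (t (n+1)))‖ := add_le_add hoscx.2 (hgs_close (n+1))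
      refine aux_convbound θ _ _ _ hθ0 hθ1 ?_ ?_
      · calc ‖f x - gs n‖ ≤ ((⌊t n⌋₊:ℝ)+1)⁻¹ + K * ‖π (f (t n))‖ := e1
          _ ≤ _ := by linarith
      · calc ‖f x - gs (n+1)‖ ≤ ((⌊t n⌋₊:ℝ)+1)⁻¹ + K * ‖π (f (t (n+1)))‖ := e2
          _ ≤ _ := by linarith
    -- boundedness of G
    have hGbdd : ∀ x, ‖G x‖ ≤ (1 + K) * ‖f‖ := by
      intro x
      set n := idx x with hn
      set θ : ℝ := ((x:ℝ) - (t n:ℝ))/((t (n+1):ℝ) - (t n:ℝ)) with hθ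
      have hθ0 : 0 ≤ θ := div_nonneg (by
        have : (t n:ℝ) ≤ (x:ℝ) := by exact_mod_cast hidx_le x
        linarith) (hden_pos n).le
      have hθ1 : θ ≤ 1 := by
        rw [hθ, div_le_one (hden_pos n)]
        have : (x:ℝ) ≤ (t (n+1):ℝ) := by exact_mod_cast (hidx_lt x).le
        linarith
      have hGx : G x = (1-θ)•(gs n) + θ•(gs (n+1)) := by
        rw [hG_def]; simp only []
        rw [← hn, hAf_def]; simp only []
        rw [← hθ]
        module
      rw [hGx]
      exact aux_convbound θ _ _ _ hθ0 hθ1 (hgs_bdd n) (hgs_bdd (n+1))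
    -- tendsto of the bound
    have hidxtop : Tendsto idx atTop atTop := by
      refine tendsto_atTop_atTop_of_monotone ?_ ?_
      · intro a b hab
        exact hidx_min a _ (lt_of_le_of_lt hab (hidx_lt b))
      · intro N
        refine ⟨t N, ?_⟩
        have hlt : t N < t (idx (t N) + 1) := hidx_lt (t N)
        have h2 : N < idx (t N) + 1 := hmono.lt_iff_lt.mp hlt
        omega
    have hγ : Tendsto (fun n : ℕ => ((⌊t n⌋₊:ℝ)+1)⁻¹
        + K * ‖π (f (t n))‖ + K * ‖π (f (t (n+1)))‖) atTop (nhds 0) := by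
      have l1 : Tendsto (fun n : ℕ => ((⌊t n⌋₊:ℝ)+1)⁻¹) atTop (nhds 0) := by
        have hfl : Tendsto (fun n => ⌊t n⌋₊) atTop atTop :=
          (tendsto_nat_floor_atTop (α := ℝ≥0)).comp htop
        have hbase : Tendsto (fun k : ℕ => ((k:ℝ)+1)⁻¹) atTop (nhds 0) := by
          simpa only [one_div] using tendsto_one_div_add_atTop_nhds_zero_nat (𝕜 := ℝ)
        exact hbase.comp hfl
      have l2 : Tendsto (fun n : ℕ => K * ‖π (f (t n))‖) atTop (nhds 0) := by
        have := (hu.comp htop).const_mul K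
        simpa using this
      have l3 : Tendsto (fun n : ℕ => K * ‖π (f (t (n+1)))‖) atTop (nhds 0) := by
        have htop' : Tendsto (fun n : ℕ => t (n+1)) atTop atTop :=
          htop.comp (tendsto_add_atTop_nat 1)
        have := (hu.comp htop').const_mul K
        simpa using this
      simpa using (l1.add l2).add l3
    have hTend : Tendsto (fun x => f x - G x) atTop (nhds 0) :=
      squeeze_zero_norm hest (hγ.comp hidxtop)
    -- assemble
    let g : BoundedContinuousFunction ℝ≥0 B :=
      BoundedContinuousFunction.ofNormedAddCommGroup G hGcont ((1+K)*‖f‖) hGbdd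
    have hg_apply : ∀ x, g x = G x := fun x => rfl
    refine ⟨g, f - g, ?_, ?_, ?_⟩
    · intro x
      rw [hg_apply]
      show π (G x) = 0
      simp only [hG_def, hAf_def, hgs_def, map_add, map_sub, hπs, hs1, sub_self,
        smul_zero, add_zero, zero_add, sub_zero]
    · have : ∀ x, (f - g) x = f x - G x := fun x => by
        simp [hg_apply]
      rw [show ⇑(f - g) = fun x => f x - G x from funext this]
      exact hTend
    · ext x
      simp
  · rintro ⟨g, h, hg, hh, rfl⟩
    have heq : ∀ x, π ((g + h) x) = π (h x) := fun x => by
      have : (g + h) x = g x + h x := rfl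
      rw [this, map_add, hg x, zero_add]
    rw [show (fun x => π ((g + h) x)) = fun x => π (h x) from funext heq]
    exact squeeze_zero_norm (fun x => hπ (h x))
      (tendsto_zero_iff_norm_tendsto_zero.mp hh)
end

section
/- For the pullback E of Lemma (pullback over X), suppose (U_n) is an increasing sequence of open subsets of X with union U. Then E(U) equals the closure of ⋃_n E(U_n). -/
/-- A C*-algebra over a topological space `X`. -/
structure CStarOver (X : Type*) [TopologicalSpace X] (A : Type*)
    [NonUnitalNormedRing A] [StarRing A] [CStarRing A] [NormedSpace ℂ A]
    [CompleteSpace A] [IsScalarTower ℂ A A] [SMulCommClass ℂ A A] : Type _ where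
  J : Set X → Submodule ℂ A
  mul_mem_left : ∀ U, IsOpen U → ∀ a b : A, b ∈ J U → a * b ∈ J U
  mul_mem_right : ∀ U, IsOpen U → ∀ a b : A, b ∈ J U → b * a ∈ J U
  isClosed : ∀ U, IsOpen U → IsClosed (J U : Set A)
  mono : ∀ U V, IsOpen U → IsOpen V → U ⊆ V → J U ≤ J V
  map_empty : J ∅ = ⊥
  map_univ : J Set.univ = ⊤
  map_inter : ∀ U V, IsOpen U → IsOpen V → J (U ∩ V) = J U ⊓ J V
  map_iUnion : ∀ U : ℕ → Set X, (∀ n, IsOpen (U n)) → Monotone U →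
    (J (⋃ n, U n) : Set A) = closure ↑(⨆ n, J (U n))

variable {X : Type*} [TopologicalSpace X]
  {I : Type*} [NonUnitalNormedRing I] [StarRing I] [CStarRing I] [NormedSpace ℂ I]
  [CompleteSpace I] [IsScalarTower ℂ I I] [SMulCommClass ℂ I I]
  {B : Type*} [NonUnitalNormedRing B] [StarRing B] [CStarRing B] [NormedSpace ℂ B]
  [CompleteSpace B] [IsScalarTower ℂ B B] [SMulCommClass ℂ B B]
  {C : Type*} [NonUnitalNormedRing C] [StarRing C] [CStarRing C] [NormedSpace ℂ C]
  [CompleteSpace C] [IsScalarTower ℂ C C] [SMulCommClass ℂ C C]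
  {A : Type*} [NonUnitalNormedRing A] [StarRing A] [CStarRing A] [NormedSpace ℂ A]
  [CompleteSpace A] [IsScalarTower ℂ A A] [SMulCommClass ℂ A A]

/-- The distinguished ideals `E(U) = E ∩ (A(U) ⊕ B(U))` of the pullback
`E = {(a,b) : φ(a) = p(b)}`. -/
def pullbackIdeal (CA : CStarOver X A) (CB : CStarOver X B)
    (φ : A →⋆ₙₐ[ℂ] C) (p : B →⋆ₙₐ[ℂ] C) (U : Set X) : Set (A × B) :=
  {x : A × B | φ x.1 = p x.2 ∧ x.1 ∈ CA.J U ∧ x.2 ∈ CB.J U}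


open Filter ENNReal Topology

section Contract

variable {A : Type*} [NonUnitalNormedRing A] [StarRing A] [CStarRing A] [NormedSpace ℂ A]
  [CompleteSpace A] [IsScalarTower ℂ A A] [SMulCommClass ℂ A A]
  {B : Type*} [NonUnitalNormedRing B] [StarRing B] [CStarRing B] [NormedSpace ℂ B]
  [CompleteSpace B] [IsScalarTower ℂ B B] [SMulCommClass ℂ B B]

/-- For a selfadjoint element of a (not necessarily star-module) non-unital C*-algebra,
the spectral radius of its image in the unitization is its norm. -/
lemma sr_inr_of_selfAdjoint {t : A} (ht : star t = t) :
    spectralRadius ℂ (t : Unitization ℂ A) = ‖t‖₊ := by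
  -- the iterated squares of `t`
  let s : ℕ → A := fun n => Nat.rec t (fun _ x => x * x) n
  have hs0 : s 0 = t := rfl
  have hsS : ∀ n, s (n + 1) = s n * s n := fun n => rfl
  have hstar : ∀ n, star (s n) = s n := by
    intro n; induction n with
    | zero => exact ht
    | succ k ih => rw [hsS, star_mul, ih]
  have hnorm : ∀ n, ‖s n‖₊ = ‖t‖₊ ^ 2 ^ n := by
    intro n; induction n with
    | zero => simp [hs0]
    | succ k ih =>
      have : ‖s k * s k‖₊ = ‖s k‖₊ * ‖s k‖₊ := by
        nth_rewrite 1 [← hstar k]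
        exact CStarRing.nnnorm_star_mul_self
      rw [hsS, this, ih, pow_succ, pow_mul, sq]
  have hinr : ∀ n, (Unitization.inr (s n) : Unitization ℂ A) = (t : Unitization ℂ A) ^ 2 ^ n := by
    intro n; induction n with
    | zero => simp [hs0]
    | succ k ih => rw [hsS, Unitization.inr_mul, ih, pow_succ, pow_mul, sq]
  have hconst : Tendsto (fun _n : ℕ => (‖t‖₊ : ℝ≥0∞)) atTop (𝓝 (‖t‖₊ : ℝ≥0∞)) :=
    tendsto_const_nhds
  refine tendsto_nhds_unique ?_ hconst
  convert (spectrum.pow_nnnorm_pow_one_div_tendsto_nhds_spectralRadius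
      ((t : Unitization ℂ A))).comp (tendsto_pow_atTop_atTop_of_one_lt (one_lt_two : 1 < (2 : ℕ))) using 1
  refine funext fun n => ?_
  rw [Function.comp_apply, ← hinr n, Unitization.nnnorm_inr, hnorm n, ENNReal.coe_pow,
    ← ENNReal.rpow_natCast, ← ENNReal.rpow_mul]
  simp

/-- A star algebra homomorphism between (not necessarily star-module) non-unital
C*-algebras is contractive. -/
lemma starAlgHom_norm_apply_le (φ : A →⋆ₙₐ[ℂ] B) (a : A) : ‖φ a‖ ≤ ‖a‖ := by
  have key : ∀ t : A, star t = t → ‖φ t‖₊ ≤ ‖t‖₊ := by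
    intro t ht
    have htφ : star (φ t) = φ t := by rw [← map_star, ht]
    let ψ : Unitization ℂ A →ₐ[ℂ] Unitization ℂ B :=
      Unitization.lift ((Unitization.inrNonUnitalAlgHom ℂ B).comp (φ : A →ₙₐ[ℂ] B))
    have hψ : ψ (t : Unitization ℂ A) = ((φ t : B) : Unitization ℂ B) := by
      simp only [ψ, Unitization.lift_apply, NonUnitalAlgHom.toAlgHom_apply, Unitization.fst_inr, map_zero,
        Unitization.snd_inr, zero_add]
      rfl
    have h1 : spectralRadius ℂ ((φ t : B) : Unitization ℂ B)
        ≤ spectralRadius ℂ (t : Unitization ℂ A) := by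
      rw [← hψ]
      exact iSup_le_iSup_of_subset (AlgHom.spectrum_apply_subset ψ _)
    rw [sr_inr_of_selfAdjoint ht, sr_inr_of_selfAdjoint htφ] at h1
    exact_mod_cast h1
  have h2 : ‖φ a‖ * ‖φ a‖ ≤ ‖a‖ * ‖a‖ := by
    have := key (star a * a) (by simp [star_mul])
    have h3 : ‖φ (star a * a)‖ ≤ ‖star a * a‖ := by exact_mod_cast this
    calc ‖φ a‖ * ‖φ a‖ = ‖star (φ a) * φ a‖ := (CStarRing.norm_star_mul_self).symm
      _ = ‖φ (star a * a)‖ := by rw [map_mul, map_star]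
      _ ≤ ‖star a * a‖ := h3
      _ = ‖a‖ * ‖a‖ := CStarRing.norm_star_mul_self
  nlinarith [norm_nonneg (φ a), norm_nonneg a]

end Contract


set_option maxHeartbeats 1000000 in
/-- For the pullback `E = {(a,b) ∈ A ⊕ B : φ(a) = p(b)}` of an extension
`I ↣ B ↠ C` of C*-algebras over `X` along an `X`-equivariant `*`-homomorphism
`φ : A → C`, with `E(V) = E ∩ (A(V) ⊕ B(V))`: if `(U n)` is an increasing sequence
of open subsets of `X` with union `U`, then `E(U)` equals the closure of
`⋃ n, E(U n)`. -/
theorem stmt_11 (CI : CStarOver X I) (CB : CStarOver X B) (CC : CStarOver X C)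
    (CA : CStarOver X A)
    (ι : I →⋆ₙₐ[ℂ] B) (p : B →⋆ₙₐ[ℂ] C) (φ : A →⋆ₙₐ[ℂ] C)
    (hι : Function.Injective ι) (hp : Function.Surjective p)
    (hexact : ∀ b : B, p b = 0 ↔ b ∈ Set.range ι)
    (hextX : ∀ U : Set X, IsOpen U →
      p '' (CB.J U) = ↑(CC.J U) ∧ ι '' (CI.J U) = ↑(CB.J U) ∩ {b : B | p b = 0})
    (hφ : ∀ U : Set X, IsOpen U → φ '' (CA.J U) ⊆ ↑(CC.J U)) :
    ∀ Un : ℕ → Set X, (∀ n, IsOpen (Un n)) → Monotone Un →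
      pullbackIdeal CA CB φ p (⋃ n, Un n) =
        closure (⋃ n, pullbackIdeal CA CB φ p (Un n)) := by
  intro Un hUn hmono
  set U : Set X := ⋃ n, Un n with hUdef
  have hUopen : IsOpen U := isOpen_iUnion hUn
  have hsub : ∀ n, Un n ⊆ U := fun n => Set.subset_iUnion Un n
  -- contractivity of the star homomorphisms
  have hφc : ∀ a : A, ‖φ a‖ ≤ ‖a‖ := starAlgHom_norm_apply_le φ
  have hpc : ∀ b : B, ‖p b‖ ≤ ‖b‖ := starAlgHom_norm_apply_le p
  have hιc : ∀ y : I, ‖ι y‖ ≤ ‖y‖ := starAlgHom_norm_apply_le ι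
  have hφcont : Continuous φ :=
    AddMonoidHomClass.continuous_of_bound φ 1 (fun a => by simpa using hφc a)
  have hpcont : Continuous p :=
    AddMonoidHomClass.continuous_of_bound p 1 (fun b => by simpa using hpc b)
  apply Set.Subset.antisymm
  · -- hard direction
    -- the Banach open-mapping control for `p : B(U) → C(U)`
    haveI : CompleteSpace (CB.J U) := (CB.isClosed U hUopen).completeSpace_coe
    haveI : CompleteSpace (CC.J U) := (CC.isClosed U hUopen).completeSpace_coe
    have hmemp : ∀ x ∈ CB.J U, p x ∈ CC.J U := by
      intro x hx
      have : p x ∈ p '' (CB.J U) := ⟨x, hx, rfl⟩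
      rwa [(hextX U hUopen).1] at this
    let plin : B →ₗ[ℂ] C :=
      { toFun := p, map_add' := map_add p, map_smul' := map_smul p }
    let f0 : (CB.J U) →ₗ[ℂ] (CC.J U) := plin.restrict hmemp
    let f : (CB.J U) →L[ℂ] (CC.J U) :=
      f0.mkContinuous 1 (fun x => by
        show ‖p (x : B)‖ ≤ 1 * ‖x‖
        simpa using hpc (x : B))
    have hfval : ∀ x : CB.J U, ((f x : C)) = p (x : B) := fun x => rfl
    have hfsurj : Function.Surjective f := by
      rintro ⟨c, hc⟩
      have hc' : c ∈ ⇑p '' (CB.J U) := by rw [(hextX U hUopen).1]; exact hc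
      obtain ⟨b, hb, hbeq⟩ := hc'
      exact ⟨⟨b, hb⟩, Subtype.ext hbeq⟩
    obtain ⟨K, hK0, hKlift⟩ := f.exists_preimage_norm_le hfsurj
    -- the union descriptions
    have hmonoA : Monotone (fun n => CA.J (Un n)) :=
      fun i j hij => CA.mono _ _ (hUn i) (hUn j) (hmono hij)
    have hmonoI : Monotone (fun n => CI.J (Un n)) :=
      fun i j hij => CI.mono _ _ (hUn i) (hUn j) (hmono hij)
    have hdirA : Directed (· ≤ ·) (fun n => CA.J (Un n)) := hmonoA.directed_le
    have hdirI : Directed (· ≤ ·) (fun n => CI.J (Un n)) := hmonoI.directed_le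
    have hA : (CA.J U : Set A) = closure ↑(⨆ n, CA.J (Un n)) := CA.map_iUnion Un hUn hmono
    have hI : (CI.J U : Set I) = closure ↑(⨆ n, CI.J (Un n)) := CI.map_iUnion Un hUn hmono
    rintro ⟨a, b⟩ ⟨hab, haU, hbU⟩
    rw [Metric.mem_closure_iff]
    intro ε hε
    set ε' : ℝ := ε / (2 * (K + 1)) with hε'def
    have hε' : 0 < ε' := by positivity
    -- approximate `a`
    have hac : a ∈ closure ↑(⨆ n, CA.J (Un n)) := by rw [← hA]; exact haU
    obtain ⟨a', ha'mem, ha'close⟩ := Metric.mem_closure_iff.mp hac ε' hε'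
    obtain ⟨n, ha'n⟩ := (Submodule.mem_iSup_of_directed _ hdirA).mp ha'mem
    -- the defect `c₀`
    have hφa' : φ a' ∈ CC.J (Un n) := hφ (Un n) (hUn n) ⟨a', ha'n, rfl⟩
    have hφa'U : φ a' ∈ CC.J U := CC.mono _ _ (hUn n) hUopen (hsub n) hφa'
    have hpbU : p b ∈ CC.J U := hmemp b hbU
    set c₀ : C := p b - φ a' with hc₀def
    have hc₀mem : c₀ ∈ CC.J U := sub_mem hpbU hφa'U
    have hc₀norm : ‖c₀‖ < ε' := by
      have : c₀ = φ (a - a') := by rw [map_sub, hc₀def, ← hab]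
      rw [this]
      calc ‖φ (a - a')‖ ≤ ‖a - a'‖ := hφc _
        _ < ε' := by rwa [← dist_eq_norm]
    -- lift the defect with norm control
    obtain ⟨b₂s, hb₂f, hb₂n⟩ := hKlift ⟨c₀, hc₀mem⟩
    set b₂ : B := (b₂s : B) with hb₂def
    have hb₂U : b₂ ∈ CB.J U := b₂s.2
    have hpb₂ : p b₂ = c₀ := by
      have := congrArg (Subtype.val) hb₂f
      simpa [hfval] using this
    have hb₂norm : ‖b₂‖ ≤ K * ε' := by
      have h1 : ‖b₂s‖ ≤ K * ‖c₀‖ := hb₂n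
      have h2 : ‖b₂‖ = ‖b₂s‖ := rfl
      nlinarith [hc₀norm, hK0, hc₀norm.le]
    -- an exact lift of `φ a'` in `B(U n)`
    have : φ a' ∈ p '' (CB.J (Un n)) := by rw [(hextX (Un n) (hUn n)).1]; exact hφa'
    obtain ⟨b₃, hb₃mem, hb₃p⟩ := this
    -- the kernel part
    set w : B := b - b₂ - b₃ with hwdef
    have hwU : w ∈ CB.J U :=
      sub_mem (sub_mem hbU hb₂U) (CB.mono _ _ (hUn n) hUopen (hsub n) hb₃mem)
    have hpw : p w = 0 := by
      rw [hwdef, map_sub, map_sub, hpb₂, hb₃p, hc₀def]; abel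
    have : w ∈ ι '' (CI.J U) := by
      rw [(hextX U hUopen).2]; exact ⟨hwU, hpw⟩
    obtain ⟨y₀, hy₀mem, hy₀w⟩ := this
    -- approximate the kernel part
    have hy₀c : y₀ ∈ closure ↑(⨆ k, CI.J (Un k)) := by rw [← hI]; exact hy₀mem
    obtain ⟨z, hzmem, hzclose⟩ := Metric.mem_closure_iff.mp hy₀c ε' hε'
    obtain ⟨k, hzk⟩ := (Submodule.mem_iSup_of_directed _ hdirI).mp hzmem
    have hιzB : ι z ∈ CB.J (Un k) := by
      have : ι z ∈ ι '' (CI.J (Un k)) := ⟨z, hzk, rfl⟩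
      rw [(hextX (Un k) (hUn k)).2] at this
      exact this.1
    have hpιz : p (ι z) = 0 := (hexact (ι z)).mpr ⟨z, rfl⟩
    -- the candidate
    set m : ℕ := max n k with hmdef
    refine ⟨(a', b₃ + ι z), Set.mem_iUnion.mpr ⟨m, ?_, ?_, ?_⟩, ?_⟩
    · rw [map_add, hb₃p, hpιz, add_zero]
    · exact CA.mono _ _ (hUn n) (hUn m) (hmono (le_max_left n k)) ha'n
    · exact add_mem (CB.mono _ _ (hUn n) (hUn m) (hmono (le_max_left n k)) hb₃mem)
        (CB.mono _ _ (hUn k) (hUn m) (hmono (le_max_right n k)) hιzB)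
    · -- the distance estimate
      rw [Prod.dist_eq]
      have hKey : ε' * (2 * (K + 1)) = ε := by
        rw [hε'def]; field_simp
      have hKε : 0 < K * ε' := mul_pos hK0 hε'
      have h1 : dist a a' < ε := by nlinarith
      have hwz : ‖w - ι z‖ < ε' := by
        rw [← hy₀w, ← map_sub]
        calc ‖ι (y₀ - z)‖ ≤ ‖y₀ - z‖ := hιc _
          _ < ε' := by rwa [← dist_eq_norm]
      have hrw : b - (b₃ + ι z) = (w - ι z) + b₂ := by rw [hwdef]; abel
      have h2' : dist b (b₃ + ι z) ≤ ‖w - ι z‖ + ‖b₂‖ := by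
        rw [dist_eq_norm, hrw]; exact norm_add_le _ _
      have h2 : dist b (b₃ + ι z) < ε := by nlinarith
      exact max_lt h1 h2
  · -- easy direction: `E(U)` is closed and contains every `E(U n)`
    have hclosed : IsClosed (pullbackIdeal CA CB φ p U) := by
      have h1 : IsClosed {x : A × B | φ x.1 = p x.2} :=
        isClosed_eq (hφcont.comp continuous_fst) (hpcont.comp continuous_snd)
      have h2 : IsClosed {x : A × B | x.1 ∈ CA.J U} :=
        (CA.isClosed U hUopen).preimage continuous_fst
      have h3 : IsClosed {x : A × B | x.2 ∈ CB.J U} :=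
        (CB.isClosed U hUopen).preimage continuous_snd
      have : pullbackIdeal CA CB φ p U =
          {x : A × B | φ x.1 = p x.2} ∩ ({x : A × B | x.1 ∈ CA.J U} ∩ {x : A × B | x.2 ∈ CB.J U}) := by
        ext x; simp [pullbackIdeal, Set.mem_inter_iff, and_assoc]
      rw [this]
      exact h1.inter (h2.inter h3)
    refine closure_minimal (Set.iUnion_subset fun n => ?_) hclosed
    rintro x ⟨h1, h2, h3⟩
    exact ⟨h1, CA.mono _ _ (hUn n) hUopen (hsub n) h2, CB.mono _ _ (hUn n) hUopen (hsub n) h3⟩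
end

section
/- Let R be a ring, M an R-module which is the colimit of an inductive system (M_j)_{j∈ℕ} of projective R-modules (with structure maps M_j → M_{j+1}), and N any R-module. Then there is a natural isomorphism lim¹_j Hom_R(M_j, N) ≅ Ext¹_R(M, N). -/
open CategoryTheory

open CategoryTheory DirectSum

section Telescope

variable {R : Type} [Ring R] (M : ℕ → Type) [∀ j, AddCommGroup (M j)] [∀ j, Module R (M j)]
  (f : ∀ i j : ℕ, i ≤ j → M i →ₗ[R] M j) [DirectedSystem M fun i j h => f i j h]

/-- The shift map on the direct sum. -/
noncomputable def shiftMap : (⨁ j, M j) →ₗ[R] (⨁ j, M j) :=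
  DirectSum.toModule R ℕ _ fun j => (DirectSum.lof R ℕ M (j + 1)).comp (f j (j + 1) (Nat.le_succ j))

/-- `id - shift`. -/
noncomputable def dMap : (⨁ j, M j) →ₗ[R] (⨁ j, M j) :=
  LinearMap.id - shiftMap M f

lemma shiftMap_lof (j : ℕ) (x : M j) :
    shiftMap M f (DirectSum.lof R ℕ M j x) =
      DirectSum.lof R ℕ M (j + 1) (f j (j + 1) (Nat.le_succ j) x) := by
  simp [shiftMap]

lemma dMap_lof (j : ℕ) (x : M j) :
    dMap M f (DirectSum.lof R ℕ M j x) =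
      DirectSum.lof R ℕ M j x - DirectSum.lof R ℕ M (j + 1) (f j (j + 1) (Nat.le_succ j) x) := by
  simp [dMap, shiftMap_lof]

/-- The relations submodule defining the direct limit. -/
noncomputable abbrev relSub : Submodule R (⨁ j, M j) :=
  Submodule.span R
    { a | ∃ (i j : _) (H : i ≤ j) (x : _),
        DirectSum.lof R ℕ M i x - DirectSum.lof R ℕ M j (f i j H x) = a }

lemma relSub_eq_range : relSub M f = LinearMap.range (dMap M f) := by
  apply le_antisymm
  · rw [Submodule.span_le]
    rintro a ⟨i, j, H, x, rfl⟩
    induction j, H using Nat.le_induction with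
    | base =>
      refine ⟨0, ?_⟩
      rw [map_zero, DirectedSystem.map_self (f := fun i j h => f i j h) x, sub_self]
    | succ j H ih =>
      obtain ⟨u, hu⟩ := ih
      refine ⟨u + DirectSum.lof R ℕ M j (f i j H x), ?_⟩
      rw [map_add, hu, dMap_lof]
      rw [DirectedSystem.map_map (f := fun i j h => f i j h) H (Nat.le_succ j) x]
      abel
  · rintro _ ⟨y, rfl⟩
    induction y using DirectSum.induction_on with
    | zero => simpa using Submodule.zero_mem _
    | of j x =>
      rw [← DirectSum.lof_eq_of R, dMap_lof]
      exact Submodule.subset_span ⟨j, j + 1, Nat.le_succ j, x, rfl⟩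
    | add a b ha hb =>
      rw [map_add]; exact Submodule.add_mem _ ha hb

lemma shiftMap_apply_zero (x : ⨁ j, M j) : shiftMap M f x 0 = 0 := by
  induction x using DirectSum.induction_on with
  | zero => simp
  | of j y =>
    rw [← DirectSum.lof_eq_of R, shiftMap_lof, DirectSum.lof_eq_of,
      DirectSum.of_eq_of_ne _ _ _ (by omega)]
  | add a b ha hb => rw [map_add, DirectSum.add_apply, ha, hb, add_zero]

lemma shiftMap_apply_succ (x : ⨁ j, M j) (j : ℕ) :
    shiftMap M f x (j + 1) = f j (j + 1) (Nat.le_succ j) (x j) := by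
  induction x using DirectSum.induction_on with
  | zero => simp
  | of i y =>
    rw [← DirectSum.lof_eq_of R, shiftMap_lof]
    by_cases h : i = j
    · subst h
      rw [DirectSum.lof_apply, DirectSum.lof_apply]
    · rw [DirectSum.lof_eq_of, DirectSum.of_eq_of_ne _ _ _ (by omega),
        DirectSum.lof_eq_of, DirectSum.of_eq_of_ne _ _ _ (by exact Ne.symm h), map_zero]
  | add a b ha hb => simp [map_add, DirectSum.add_apply, ha, hb]

lemma dMap_injective : Function.Injective (dMap M f) := by
  rw [← LinearMap.ker_eq_bot, LinearMap.ker_eq_bot']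
  intro x hx
  have hx' : ∀ k, x k = shiftMap M f x k := by
    intro k
    have h0 : x k - shiftMap M f x k = 0 := by
      have := congrArg (fun z => z k) hx
      simpa [dMap, DirectSum.sub_apply] using this
    exact sub_eq_zero.mp h0
  have hz : ∀ k, x k = 0 := by
    intro k
    induction k with
    | zero => rw [hx' 0, shiftMap_apply_zero]
    | succ j ih => rw [hx' (j + 1), shiftMap_apply_succ, ih, map_zero]
  exact DFinsupp.ext hz

/-- The canonical map to the direct limit. -/
noncomputable def piMap : (⨁ j, M j) →ₗ[R] Module.DirectLimit M f :=
  DirectSum.toModule R ℕ _ fun i => Module.DirectLimit.of R ℕ M f i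

noncomputable def backMap : Module.DirectLimit M f →ₗ[R] (⨁ j, M j) ⧸ relSub M f :=
  Module.DirectLimit.lift R ℕ M f (fun i => (relSub M f).mkQ.comp (DirectSum.lof R ℕ M i))
    (fun i j hij x => by
      exact ((Submodule.Quotient.eq (relSub M f)).mpr
        (Submodule.subset_span ⟨i, j, hij, x, rfl⟩)).symm)

lemma back_comp : (backMap M f).comp (piMap M f) = (relSub M f).mkQ := by
  apply DirectSum.linearMap_ext
  intro i
  ext x
  simp [backMap, piMap, Module.DirectLimit.lift_of]
  exact Module.DirectLimit.lift_of _ _ x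

lemma relSub_le_ker : relSub M f ≤ LinearMap.ker (piMap M f) := by
  rw [Submodule.span_le]
  rintro a ⟨i, j, H, x, rfl⟩
  simp [piMap, Module.DirectLimit.of_f]

lemma piMap_surjective : Function.Surjective (piMap M f) := by
  intro z
  obtain ⟨i, x, rfl⟩ := Module.DirectLimit.exists_of z
  exact ⟨DirectSum.lof R ℕ M i x, by simp [piMap]⟩

end Telescope

section Resolution

open CategoryTheory.Limits

variable (R : Type) [Ring R] (M : ℕ → Type) [∀ j, AddCommGroup (M j)] [∀ j, Module R (M j)]
  (f : ∀ i j : ℕ, i ≤ j → M i →ₗ[R] M j) [DirectedSystem M fun i j h => f i j h]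

noncomputable def resX : ℕ → ModuleCat.{0} R := fun n =>
  match n with
  | 0 => ModuleCat.of R (⨁ j, M j)
  | 1 => ModuleCat.of R (⨁ j, M j)
  | _ + 2 => ModuleCat.of R PUnit

noncomputable def resD : ∀ n : ℕ, resX R M (n + 1) ⟶ resX R M n := fun n =>
  match n with
  | 0 => ModuleCat.ofHom (dMap M f)
  | _ + 1 => 0

noncomputable def resComplex : ChainComplex (ModuleCat.{0} R) ℕ :=
  ChainComplex.of (resX R M) (resD R M f)
    (fun n => by rw [show resD R M f (n + 1) = 0 from rfl, Limits.zero_comp])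

lemma resComplex_d10 : (resComplex R M f).d 1 0 = ModuleCat.ofHom (dMap M f) :=
  ChainComplex.of_d (resX R M) (resD R M f) 0

/-- The augmentation. -/
noncomputable def resPi0 : (resComplex R M f).X 0 ⟶ ModuleCat.of R (Module.DirectLimit M f) :=
  ModuleCat.ofHom (piMap M f)

lemma dMap_comp_pi0 : ModuleCat.ofHom (dMap M f) ≫ resPi0 R M f = 0 := by
  apply ModuleCat.hom_ext; apply LinearMap.ext; intro x
  show piMap M f (dMap M f x) = 0
  have hm : dMap M f x ∈ relSub M f := by
    rw [relSub_eq_range]; exact ⟨x, rfl⟩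
  exact relSub_le_ker M f hm

lemma resD10_pi0 : (resComplex R M f).d 1 0 ≫ resPi0 R M f = 0 := by
  rw [resComplex_d10]; exact dMap_comp_pi0 R M f

noncomputable def resPi : resComplex R M f ⟶
    (ChainComplex.single₀ (ModuleCat.{0} R)).obj (ModuleCat.of R (Module.DirectLimit M f)) :=
  (ChainComplex.toSingle₀Equiv _ _).symm ⟨resPi0 R M f, resD10_pi0 R M f⟩

lemma resComplex_exactAt_succ (n : ℕ) : (resComplex R M f).ExactAt (n + 1) := by
  rw [HomologicalComplex.exactAt_iff' _ (n + 1 + 1) (n + 1) n (by simp) (by simp)]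
  cases n with
  | zero =>
    rw [ShortComplex.moduleCat_exact_iff]
    intro x hx
    have h1 : (resComplex R M f).d 1 0 x = 0 := hx
    rw [resComplex_d10] at h1
    have hx0 : x = 0 := by
      apply dMap_injective M f
      exact h1.trans (map_zero (dMap M f)).symm
    exact ⟨0, by rw [map_zero, hx0]⟩
  | succ n =>
    apply ShortComplex.exact_of_isZero_X₂
    exact ModuleCat.isZero_of_subsingleton (ModuleCat.of R PUnit)

lemma resComplex_projective (hproj : ∀ j, Module.Projective R (M j)) (n : ℕ) :
    Projective ((resComplex R M f).X n) := by
  haveI : ∀ j, Module.Projective R (M j) := hproj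
  have hD : Module.Projective R (Π₀ j, M j) := inferInstance
  have hP : Module.Projective R PUnit := inferInstance
  obtain (_ | _ | n) := n
  · exact (IsProjective.iff_projective.{0, 0} _).mp hD
  · exact (IsProjective.iff_projective.{0, 0} _).mp hD
  · exact (IsProjective.iff_projective.{0, 0} _).mp hP

instance : QuasiIso (resPi R M f) := by
  constructor
  intro n
  cases n with
  | zero =>
    rw [ChainComplex.quasiIsoAt₀_iff, ShortComplex.quasiIso_iff_of_zeros']
    · have hEx : (ShortComplex.mk (ModuleCat.ofHom (dMap M f)) (resPi0 R M f)
          (dMap_comp_pi0 R M f)).Exact := by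
        rw [ShortComplex.moduleCat_exact_iff]
        intro x hx
        have hx' : x ∈ relSub M f := by
          have h2 : (relSub M f).mkQ x = 0 := by
            rw [← back_comp M f, LinearMap.comp_apply]
            exact (congrArg (backMap M f) hx).trans (map_zero _)
          exact (Submodule.Quotient.mk_eq_zero _).mp h2
        rw [relSub_eq_range] at hx'
        obtain ⟨y, hy⟩ := hx'
        exact ⟨y, hy⟩
      have hEpi : Epi (resPi0 R M f) := by
        rw [ModuleCat.epi_iff_surjective]
        exact piMap_surjective M f
      refine (ShortComplex.exact_and_epi_g_iff_of_iso ?_).2 ⟨hEx, hEpi⟩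
      refine ShortComplex.isoMk (Iso.refl _) (Iso.refl _) (Iso.refl _) ?_ ?_
      · dsimp
        exact resComplex_d10 R M f
      · dsimp
        show (resPi R M f).f 0 = resPi0 R M f
        rw [resPi]
        exact ChainComplex.toSingle₀Equiv_symm_apply_f_zero (resPi0 R M f) (resD10_pi0 R M f)
    all_goals rfl
  | succ n =>
    rw [quasiIsoAt_iff_exactAt']
    · exact resComplex_exactAt_succ R M f n
    · apply ChainComplex.exactAt_succ_single_obj

noncomputable def resolution (hproj : ∀ j, Module.Projective R (M j)) :
    ProjectiveResolution (ModuleCat.of R (Module.DirectLimit M f)) where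
  complex := resComplex R M f
  projective := resComplex_projective R M f hproj
  π := resPi R M f

end Resolution

section ExtSide

open CategoryTheory.Limits

variable (R : Type) [Ring R] (M : ℕ → Type) [∀ j, AddCommGroup (M j)] [∀ j, Module R (M j)]
  (f : ∀ i j : ℕ, i ≤ j → M i →ₗ[R] M j) [DirectedSystem M fun i j h => f i j h]
  (N : Type) [AddCommGroup N] [Module R N]

noncomputable def KC : CochainComplex (ModuleCat.{0} ℤ) ℕ :=
  (resComplex R M f).linearYonedaObj ℤ (ModuleCat.of R N)

lemma KC_isZero_X2 : Limits.IsZero ((KC R M f N).X 2) := by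
  haveI : Subsingleton ((resComplex R M f).X 2 ⟶ ModuleCat.of R N) := by
    refine ⟨fun a b => ?_⟩
    ext x
    have hx : x = (0 : (resComplex R M f).X 2) :=
      (inferInstance : Subsingleton PUnit.{1}).elim _ _
    rw [hx, map_zero, map_zero]
  haveI : Subsingleton ((KC R M f N).X 2) :=
    inferInstanceAs (Subsingleton ((resComplex R M f).X 2 ⟶ ModuleCat.of R N))
  exact ModuleCat.isZero_of_subsingleton _

lemma KC_g_zero : ((KC R M f N).sc' 0 1 2).g = 0 :=
  (KC_isZero_X2 R M f N).eq_of_tgt _ _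

noncomputable def lhd : ((KC R M f N).sc' 0 1 2).LeftHomologyData :=
  CategoryTheory.ShortComplex.LeftHomologyData.ofHasCokernel _ (KC_g_zero R M f N)

noncomputable def extIso (hproj : ∀ j, Module.Projective R (M j)) :
    ((_root_.Ext ℤ (ModuleCat.{0} R) 1).obj
        (Opposite.op (ModuleCat.of R (Module.DirectLimit M f)))).obj (ModuleCat.of R N) ≅
      ModuleCat.of ℤ
        ((KC R M f N).X 1 ⧸ LinearMap.range (((KC R M f N).sc' 0 1 2).f.hom)) :=
  (resolution R M f hproj).isoExt 1 (ModuleCat.of R N) ≪≫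
    (KC R M f N).homologyIsoSc' 0 1 2 (by simp) (by simp) ≪≫
    (lhd R M f N).homologyIso ≪≫
    ModuleCat.cokernelIsoRangeQuotient (((KC R M f N).sc' 0 1 2).f)

end ExtSide

section Key

variable {R : Type} [Ring R] (M : ℕ → Type) [∀ j, AddCommGroup (M j)] [∀ j, Module R (M j)]
  (f : ∀ i j : ℕ, i ≤ j → M i →ₗ[R] M j) [DirectedSystem M fun i j h => f i j h]
  {N : Type} [AddCommGroup N] [Module R N]

lemma key (g : ∀ j, M j →ₗ[R] N) :
    (∃ φ : (⨁ j, M j) →ₗ[R] N,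
        (DirectSum.toModule R ℕ N g : (⨁ j, M j) →ₗ[R] N) = φ.comp (dMap M f)) ↔
      ∃ h : ∀ j, M j →ₗ[R] N,
        g = fun j => h j - (h (j + 1)).comp (f j (j + 1) (Nat.le_succ j)) := by
  constructor
  · rintro ⟨φ, hφ⟩
    refine ⟨fun j => φ.comp (DirectSum.lof R ℕ M j), ?_⟩
    funext j
    ext x
    have h1 : (DirectSum.toModule R ℕ N g : (⨁ j, M j) →ₗ[R] N) (DirectSum.lof R ℕ M j x) =
        φ (dMap M f (DirectSum.lof R ℕ M j x)) := by rw [hφ]; rfl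
    rw [DirectSum.toModule_lof, dMap_lof, map_sub] at h1
    simpa using h1
  · rintro ⟨h, rfl⟩
    refine ⟨DirectSum.toModule R ℕ N h, ?_⟩
    apply DirectSum.linearMap_ext
    intro j
    ext x
    simp only [LinearMap.coe_comp, Function.comp_apply]
    rw [DirectSum.toModule_lof, dMap_lof, map_sub, DirectSum.toModule_lof,
      DirectSum.toModule_lof]
    simp

end Key

section DStar

open CategoryTheory.Limits

variable (R : Type) [Ring R] (M : ℕ → Type) [∀ j, AddCommGroup (M j)] [∀ j, Module R (M j)]
  (f : ∀ i j : ℕ, i ≤ j → M i →ₗ[R] M j) [DirectedSystem M fun i j h => f i j h]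
  (N : Type) [AddCommGroup N] [Module R N]

lemma dstar_eq : (((KC R M f N).sc' 0 1 2).f) =
    ModuleCat.ofHom (Linear.leftComp ℤ (ModuleCat.of R N) (ModuleCat.ofHom (dMap M f))) := by
  show ((resComplex R M f).linearYonedaObj ℤ (ModuleCat.of R N)).d 0 1 = _
  rw [ChainComplex.linearYonedaObj_d, resComplex_d10]
  rfl

end DStar

open CategoryTheory

/-- Let `R` be a ring, `M` the colimit of an inductive system `(M j)_{j ∈ ℕ}` of
projective `R`-modules, and `N` any `R`-module.  Then `lim¹_j Hom_R(M j, N)` is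
naturally isomorphic to `Ext¹_R(M, N)`.  Here `lim¹` is the cokernel of
`id - S* : ∏ⱼ Hom_R(M j, N) → ∏ⱼ Hom_R(M j, N)` (with `S` induced by the structure
maps), so the claim is that there is a surjective additive map
`q : ∏ⱼ Hom_R(M j, N) → Ext¹_R(M, N)` whose kernel is exactly the image of
`id - S*`. -/
theorem stmt_12 {R : Type} [Ring R]
    (M : ℕ → Type) [∀ j, AddCommGroup (M j)] [∀ j, Module R (M j)]
    (f : ∀ i j : ℕ, i ≤ j → M i →ₗ[R] M j)
    [DirectedSystem M fun i j h => f i j h]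
    (hproj : ∀ j, Module.Projective R (M j))
    (N : Type) [AddCommGroup N] [Module R N] :
    ∃ q : (∀ j : ℕ, M j →ₗ[R] N) →+
        ((_root_.Ext ℤ (ModuleCat.{0} R) 1).obj
          (Opposite.op (ModuleCat.of R (Module.DirectLimit M f)))).obj (ModuleCat.of R N),
      Function.Surjective q ∧
      ∀ g : ∀ j : ℕ, M j →ₗ[R] N,
        q g = 0 ↔ ∃ h : ∀ j : ℕ, M j →ₗ[R] N,
          g = fun j => h j - (h (j + 1)).comp (f j (j + 1) (Nat.le_succ j)) := by
  classical
  let E := extIso R M f N hproj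
  let T : (∀ j : ℕ, M j →ₗ[R] N) → ((KC R M f N).X 1) := fun g =>
    ModuleCat.ofHom (DirectSum.toModule R ℕ N g : (⨁ j, M j) →ₗ[R] N)
  have hT : ∀ a b, T (a + b) = T a + T b := by
    intro a b
    show ModuleCat.ofHom (DirectSum.toModule R ℕ N (a + b) : (⨁ j, M j) →ₗ[R] N) =
      ModuleCat.ofHom (DirectSum.toModule R ℕ N a : (⨁ j, M j) →ₗ[R] N) +
        ModuleCat.ofHom (DirectSum.toModule R ℕ N b)
    apply ModuleCat.hom_ext
    apply DirectSum.linearMap_ext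
    intro j
    ext x
    simp [DirectSum.toModule_lof]
  have hdstar : ∀ (φ : (KC R M f N).X 0) (x : (KC R M f N).X 1),
      ((KC R M f N).sc' 0 1 2).f φ = x ↔
        (x : ModuleCat.of R (⨁ j, M j) ⟶ ModuleCat.of R N).hom =
          (φ : ModuleCat.of R (⨁ j, M j) ⟶ ModuleCat.of R N).hom.comp (dMap M f) := by
    intro φ x
    rw [dstar_eq]
    constructor
    · intro h; exact h ▸ rfl
    · intro h; exact ModuleCat.hom_ext h.symm
  refine ⟨AddMonoidHom.mk' (fun g => E.inv (Submodule.Quotient.mk (T g))) ?_, ?_, ?_⟩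
  · intro a b
    show E.inv (Submodule.Quotient.mk (T (a + b))) =
      E.inv (Submodule.Quotient.mk (T a)) + E.inv (Submodule.Quotient.mk (T b))
    rw [hT a b]
    have e := Submodule.Quotient.mk_add (p := LinearMap.range (((KC R M f N).sc' 0 1 2).f.hom))
      (x := T a) (y := T b)
    exact (congrArg (ConcreteCategory.hom E.inv) e).trans (map_add _ _ _)
  · intro y
    obtain ⟨z, hz⟩ := Submodule.Quotient.mk_surjective _ (E.hom y)
    let g : ∀ j : ℕ, M j →ₗ[R] N := fun j =>
      (ModuleCat.Hom.hom z).comp (DirectSum.lof R ℕ M j)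
    have hTz : T g = z := by
      show ModuleCat.ofHom (DirectSum.toModule R ℕ N g : (⨁ j, M j) →ₗ[R] N) = z
      apply ModuleCat.hom_ext
      apply DirectSum.linearMap_ext
      intro j
      ext x
      rw [ModuleCat.hom_ofHom, LinearMap.comp_apply, DirectSum.toModule_lof]
      rfl
    refine ⟨g, ?_⟩
    show E.inv (Submodule.Quotient.mk (T g)) = y
    rw [hTz, hz]
    have h1 : (E.hom ≫ E.inv) y = y := by rw [E.hom_inv_id]; rfl
    exact h1
  · intro g
    have hinj : Function.Injective E.inv :=
      (ModuleCat.mono_iff_injective E.inv).mp inferInstance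
    constructor
    · intro h0
      have h1 : Submodule.Quotient.mk (p := LinearMap.range (((KC R M f N).sc' 0 1 2).f.hom))
          (T g) = 0 := by
        apply hinj
        rw [map_zero]
        exact h0
      replace h1 := (Submodule.Quotient.mk_eq_zero _).mp h1
      obtain ⟨φ, hφ⟩ := h1
      rw [← key M f g]
      exact ⟨ModuleCat.Hom.hom φ, (hdstar φ (T g)).mp hφ⟩
    · intro hg
      rw [← key M f g] at hg
      obtain ⟨φ, hφ⟩ := hg
      have h1 : T g ∈ LinearMap.range (((KC R M f N).sc' 0 1 2).f.hom) :=
        ⟨ModuleCat.ofHom φ, (hdstar (ModuleCat.ofHom φ) (T g)).mpr hφ⟩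
      show E.inv (Submodule.Quotient.mk (T g)) = 0
      rw [(Submodule.Quotient.mk_eq_zero _).mpr h1]; exact map_zero _
end
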